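/- For q = 2^n and a ∈ F_q, the Kloosterman sum satisfies K(a) ≡ -Σ_{j=1}^{q-2} g(j)² ω^j(a) (mod 2^n) in the ring of integers of ℚ_2(ξ), where g(j) = τ(ω^{-j}). -/

import Mathlib

set_option maxHeartbeats 1000000

section KGSAux

variable {F : Type*} [Field F] [Fintype F] [DecidableEq F] [CharP F 2] [Algebra (ZMod 2) F]

private lemma KGS.pow_val_add {R : Type*} [Ring R] (a b : ZMod 2) :
    (-1 : R) ^ (a + b).val = (-1) ^ a.val * (-1) ^ b.val := by
  rw [ZMod.val_add, ← neg_one_pow_eq_pow_mod_two, pow_add]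

private lemma KGS.psi_add (x y : F) :
    (-1 : WittVector 2 F) ^ (Algebra.trace (ZMod 2) F (x + y)).val
      = (-1) ^ (Algebra.trace (ZMod 2) F x).val * (-1) ^ (Algebra.trace (ZMod 2) F y).val := by
  rw [map_add, KGS.pow_val_add]

private lemma KGS.teich_injective :
    Function.Injective (WittVector.teichmuller 2 : F →* WittVector 2 F) := fun x y h => by
  simpa using congrArg (fun w => WittVector.coeff w 0) h

/-- sum over `F` equals value at `0` plus sum over units. -/
private lemma KGS.sum_units {M : Type*} [AddCommMonoid M] (f : F → M) :
    ∑ x : F, f x = f 0 + ∑ u : Fˣ, f u := by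
  rw [← Finset.add_sum_erase Finset.univ f (Finset.mem_univ 0)]
  congr 1
  rw [Finset.sum_subtype (p := fun x : F => x ≠ 0) (Finset.univ.erase 0) (by simp) f]
  exact (Fintype.sum_equiv unitsEquivNeZero (fun u => f u) (fun x => f x.1)
    (fun u => rfl)).symm

private lemma KGS.char_sum {u : Fˣ} (hu : u ≠ 1) :
    ∑ j ∈ Finset.range (Fintype.card F - 1),
      (WittVector.teichmuller 2 ((u : F))) ^ j = 0 := by
  have h1 : (WittVector.teichmuller 2 ((u : F))) ^ (Fintype.card F - 1) = 1 := by
    rw [← map_pow, FiniteField.pow_card_sub_one_eq_one _ u.ne_zero, map_one]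
  have h2 := geom_sum_mul (WittVector.teichmuller 2 ((u : F))) (Fintype.card F - 1)
  rw [h1, sub_self] at h2
  rcases mul_eq_zero.mp h2 with h | h
  · exact h
  · exfalso
    apply hu
    have : WittVector.teichmuller 2 ((u : F)) = WittVector.teichmuller 2 ((1 : F)) := by
      rw [map_one]; linear_combination h
    exact Units.ext (KGS.teich_injective this)

private lemma KGS.exists_trace_ne_zero : ∃ c : F, Algebra.trace (ZMod 2) F c ≠ 0 := by
  by_contra! h
  have := (traceForm_nondegenerate (ZMod 2) F).1 1
    (fun b => by simpa [Algebra.traceForm_apply] using h b)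
  exact one_ne_zero this

private lemma KGS.int_sum_zero :
    ∑ x : F, (-1 : ℤ) ^ (Algebra.trace (ZMod 2) F x).val = 0 := by
  obtain ⟨c, hc⟩ := KGS.exists_trace_ne_zero (F := F)
  have hc1 : Algebra.trace (ZMod 2) F c = 1 := by
    have := hc; revert this; generalize Algebra.trace (ZMod 2) F c = v
    intro h; fin_cases v <;> [exact absurd rfl h; rfl]
  have key : ∑ x : F, (-1 : ℤ) ^ (Algebra.trace (ZMod 2) F x).val
      = - ∑ x : F, (-1 : ℤ) ^ (Algebra.trace (ZMod 2) F x).val := by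
    nth_rewrite 1 [← Fintype.sum_equiv (Equiv.addRight c)
      (fun x => (-1 : ℤ) ^ (Algebra.trace (ZMod 2) F (x + c)).val)
      (fun x => (-1 : ℤ) ^ (Algebra.trace (ZMod 2) F x).val) (fun x => rfl)]
    rw [← Finset.sum_neg_distrib]
    apply Finset.sum_congr rfl
    intro x _
    rw [map_add, hc1]
    generalize Algebra.trace (ZMod 2) F x = v
    fin_cases v <;> decide
  linarith

private lemma KGS.units_sum_neg_one :
    ∑ u : Fˣ, (-1 : ℤ) ^ (Algebra.trace (ZMod 2) F (u : F)).val = -1 := by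
  have h := KGS.int_sum_zero (F := F)
  rw [KGS.sum_units (fun x : F => (-1 : ℤ) ^ (Algebra.trace (ZMod 2) F x).val)] at h
  simp only [map_zero, ZMod.val_zero, pow_zero] at h
  linarith

private lemma KGS.units_sum_W :
    ∑ u : Fˣ, (-1 : WittVector 2 F) ^ (Algebra.trace (ZMod 2) F (u : F)).val = -1 := by
  have h := KGS.units_sum_neg_one (F := F)
  have := congrArg (fun z : ℤ => (z : WittVector 2 F)) h
  push_cast at this
  exact this

private lemma KGS.pow_card_sub_two {x : F} (hx : x ≠ 0) (h2 : 2 ≤ Fintype.card F) :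
    x ^ (Fintype.card F - 2) = x⁻¹ := by
  have h1 : x * x ^ (Fintype.card F - 2) = 1 := by
    rw [← pow_succ']
    have : Fintype.card F - 2 + 1 = Fintype.card F - 1 := by omega
    rw [this, FiniteField.pow_card_sub_one_eq_one _ hx]
  exact (inv_eq_of_mul_eq_one_right h1).symm




private lemma KGS.inv_reindex {M : Type*} [AddCommMonoid M] (f : Fˣ → M) :
    ∑ u : Fˣ, f u⁻¹ = ∑ u : Fˣ, f u :=
  Fintype.sum_equiv (Equiv.inv Fˣ) _ _ (fun _ => rfl)

private lemma KGS.g_zero (g : ℕ → WittVector 2 F)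
    (hg : ∀ j, g j = - ∑ x : Fˣ, (WittVector.teichmuller 2 ((x⁻¹ : Fˣ) : F)) ^ j
          * (-1) ^ (Algebra.trace (ZMod 2) F x).val) : g 0 = 1 := by
  rw [hg 0]
  simp only [pow_zero, one_mul]
  rw [KGS.units_sum_W]
  ring

private lemma KGS.main (h4 : 4 ≤ Fintype.card F) (a : F)
    (g : ℕ → WittVector 2 F)
    (hg : ∀ j, g j = - ∑ x : Fˣ, (WittVector.teichmuller 2 ((x⁻¹ : Fˣ) : F)) ^ j
          * (-1) ^ (Algebra.trace (ZMod 2) F x).val) :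
    ((Fintype.card F : ℕ) : WittVector 2 F) ∣
      ((∑ x : F, (-1 : ℤ) ^
          (Algebra.trace (ZMod 2) F (x ^ (Fintype.card F - 2) + a * x)).val :
          ℤ) : WittVector 2 F)
        - (- ∑ j ∈ Finset.Icc 1 (Fintype.card F - 2),
              (g j) ^ 2 * WittVector.teichmuller 2 (a ^ j)) := by
  classical
  set Q := Fintype.card F with hQ
  have hQ2 : Q - 2 ≠ 0 := by omega
  -- cast the Kloosterman sum into the Witt vectors
  have hcast : ((∑ x : F, (-1 : ℤ) ^
        (Algebra.trace (ZMod 2) F (x ^ (Q - 2) + a * x)).val : ℤ) : WittVector 2 F)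
      = ∑ x : F, (-1 : WittVector 2 F) ^
        (Algebra.trace (ZMod 2) F (x ^ (Q - 2) + a * x)).val := by
    push_cast
    rfl
  rcases eq_or_ne a 0 with rfl | ha
  · -- case a = 0
    have hrhs : ∑ j ∈ Finset.Icc 1 (Q - 2),
        (g j) ^ 2 * WittVector.teichmuller 2 ((0 : F) ^ j) = 0 := by
      apply Finset.sum_eq_zero
      intro j hj
      have hj1 : j ≠ 0 := by
        rcases Finset.mem_Icc.mp hj with ⟨h1, _⟩; omega
      simp [zero_pow hj1, WittVector.teichmuller_zero]
    have hS : (∑ x : F, (-1 : ℤ) ^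
        (Algebra.trace (ZMod 2) F (x ^ (Q - 2) + 0 * x)).val : ℤ) = 0 := by
      have e1 : ∀ x : F, x ^ (Q - 2) + 0 * x = x ^ (Q - 2) := by intro x; ring
      simp only [e1]
      rw [KGS.sum_units (fun x : F => (-1 : ℤ) ^ (Algebra.trace (ZMod 2) F (x ^ (Q - 2))).val)]
      have e2 : ∀ u : Fˣ, ((u : F)) ^ (Q - 2) = ((u⁻¹ : Fˣ) : F) := by
        intro u
        rw [KGS.pow_card_sub_two u.ne_zero (by omega)]
        simp
      simp only [e2, zero_pow hQ2, map_zero, ZMod.val_zero, pow_zero]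
      rw [KGS.inv_reindex (fun u : Fˣ => (-1 : ℤ) ^ (Algebra.trace (ZMod 2) F (u : F)).val)]
      rw [KGS.units_sum_neg_one]
      ring
    rw [hS, hrhs]
    simp
  · -- case a ≠ 0
    set ua : Fˣ := Units.mk0 a ha with hua
    set T : F →* WittVector 2 F := WittVector.teichmuller 2 with hT
    -- the shared units sum
    set B : WittVector 2 F := ∑ u : Fˣ, (-1 : WittVector 2 F) ^
        (Algebra.trace (ZMod 2) F ((u : F) + a * ((u⁻¹ : Fˣ) : F))).val with hB
    -- Step 1 : the Kloosterman sum equals 1 + B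
    have hK : ((∑ x : F, (-1 : ℤ) ^
          (Algebra.trace (ZMod 2) F (x ^ (Q - 2) + a * x)).val : ℤ) : WittVector 2 F)
        = 1 + B := by
      rw [hcast]
      rw [KGS.sum_units (fun x : F => (-1 : WittVector 2 F) ^
          (Algebra.trace (ZMod 2) F (x ^ (Q - 2) + a * x)).val)]
      have h0 : (0 : F) ^ (Q - 2) + a * 0 = 0 := by
        rw [zero_pow hQ2]; ring
      have e3 : ∑ u : Fˣ, (-1 : WittVector 2 F) ^
          (Algebra.trace (ZMod 2) F (((u : F)) ^ (Q - 2) + a * (u : F))).val = B := by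
        have e2 : ∀ u : Fˣ, ((u : F)) ^ (Q - 2) + a * (u : F)
            = ((u⁻¹ : Fˣ) : F) + a * (u : F) := by
          intro u
          rw [KGS.pow_card_sub_two u.ne_zero (by omega)]
          simp
        simp only [e2]
        rw [hB]
        rw [← KGS.inv_reindex (fun u : Fˣ => (-1 : WittVector 2 F) ^
            (Algebra.trace (ZMod 2) F ((u : F) + a * ((u⁻¹ : Fˣ) : F))).val)]
        apply Finset.sum_congr rfl
        intro u _
        simp [add_comm]
      simp only [h0, map_zero, ZMod.val_zero, pow_zero]
      rw [e3]
    -- Step 2 : the full Gauss-sum expression over range (Q-1)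
    have hA : ∑ j ∈ Finset.range (Q - 1), (g j) ^ 2 * T (a ^ j)
        = ((Q - 1 : ℕ) : WittVector 2 F) * B := by
      have hterm : ∀ j, (g j) ^ 2 * T (a ^ j)
          = ∑ x : Fˣ, ∑ y : Fˣ, ((-1 : WittVector 2 F) ^ (Algebra.trace (ZMod 2) F (x : F)).val
              * (-1) ^ (Algebra.trace (ZMod 2) F (y : F)).val)
              * (T (((x⁻¹ * y⁻¹ * ua : Fˣ)) : F)) ^ j := by
        intro j
        rw [hg j, neg_sq, sq, Finset.sum_mul_sum, Finset.sum_mul]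
        apply Finset.sum_congr rfl; intro x _
        rw [Finset.sum_mul]
        apply Finset.sum_congr rfl; intro y _
        have hcoe : ((x⁻¹ * y⁻¹ * ua : Fˣ) : F) = ((x⁻¹ : Fˣ) : F) * ((y⁻¹ : Fˣ) : F) * a := by
          simp [hua]
        rw [hcoe, map_pow, map_mul, map_mul, mul_pow, mul_pow]
        ring
      have hswap : ∑ j ∈ Finset.range (Q - 1), (g j) ^ 2 * T (a ^ j)
          = ∑ x : Fˣ, ∑ y : Fˣ, ((-1 : WittVector 2 F) ^ (Algebra.trace (ZMod 2) F (x : F)).val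
              * (-1) ^ (Algebra.trace (ZMod 2) F (y : F)).val)
              * ∑ j ∈ Finset.range (Q - 1), (T (((x⁻¹ * y⁻¹ * ua : Fˣ)) : F)) ^ j := by
        rw [Finset.sum_congr rfl (fun j _ => hterm j), Finset.sum_comm]
        apply Finset.sum_congr rfl; intro x _
        rw [Finset.sum_comm]
        apply Finset.sum_congr rfl; intro y _
        rw [Finset.mul_sum]
      have hinner : ∀ x y : Fˣ, (∑ j ∈ Finset.range (Q - 1),
          (T (((x⁻¹ * y⁻¹ * ua : Fˣ)) : F)) ^ j)
          = if y = x⁻¹ * ua then ((Q - 1 : ℕ) : WittVector 2 F) else 0 := by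
        intro x y
        by_cases hy : y = x⁻¹ * ua
        · subst hy
          have hc : x⁻¹ * (x⁻¹ * ua)⁻¹ * ua = 1 := by
            rw [mul_right_comm]
            simp only [mul_inv_rev, inv_inv]
            group
          rw [if_pos rfl, hc]
          simp
        · rw [if_neg hy]
          apply KGS.char_sum
          intro hc
          apply hy
          rw [mul_right_comm] at hc
          exact (mul_inv_eq_one.mp hc).symm
      rw [hswap]
      have hy : ∀ x : Fˣ, (∑ y : Fˣ,
          ((-1 : WittVector 2 F) ^ (Algebra.trace (ZMod 2) F (x : F)).val
              * (-1) ^ (Algebra.trace (ZMod 2) F (y : F)).val)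
              * ∑ j ∈ Finset.range (Q - 1), (T (((x⁻¹ * y⁻¹ * ua : Fˣ)) : F)) ^ j)
          = ((Q - 1 : ℕ) : WittVector 2 F) * ((-1 : WittVector 2 F) ^
              (Algebra.trace (ZMod 2) F ((x : F) + a * ((x⁻¹ : Fˣ) : F))).val) := by
        intro x
        simp only [hinner, mul_ite, mul_zero]
        rw [Finset.sum_ite_eq' Finset.univ (x⁻¹ * ua)
          (fun y => ((-1 : WittVector 2 F) ^ (Algebra.trace (ZMod 2) F (x : F)).val
              * (-1) ^ (Algebra.trace (ZMod 2) F (y : F)).val)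
              * ((Q - 1 : ℕ) : WittVector 2 F))]
        rw [if_pos (Finset.mem_univ _)]
        have hcoe2 : ((x⁻¹ * ua : Fˣ) : F) = a * ((x⁻¹ : Fˣ) : F) := by
          simp [hua, mul_comm]
        rw [hcoe2, ← KGS.psi_add]
        ring
      rw [Finset.sum_congr rfl (fun x _ => hy x), ← Finset.mul_sum, hB]
    -- Step 3 : split off j = 0
    have hsplit : ∑ j ∈ Finset.Icc 1 (Q - 2), (g j) ^ 2 * T (a ^ j)
        = ((Q - 1 : ℕ) : WittVector 2 F) * B - 1 := by
      have hr : Finset.range (Q - 1) = insert 0 (Finset.Icc 1 (Q - 2)) := by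
        ext j
        simp only [Finset.mem_range, Finset.mem_insert, Finset.mem_Icc]
        omega
      have h0 : (0 : ℕ) ∉ Finset.Icc 1 (Q - 2) := by simp
      rw [hr, Finset.sum_insert h0] at hA
      have hg0 : (g 0) ^ 2 * T (a ^ 0) = 1 := by
        rw [KGS.g_zero g hg]
        simp [hT]
      rw [hg0] at hA
      linear_combination hA
    rw [hK, hsplit]
    have hQ1 : ((Q - 1 : ℕ) : WittVector 2 F) = ((Q : ℕ) : WittVector 2 F) - 1 := by
      have : (1 : ℕ) ≤ Q := by omega
      push_cast [Nat.cast_sub this]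
      ring
    refine ⟨B, ?_⟩
    rw [hQ1]
    ring


end KGSAux

/-- For `q = 2^n` and `a ∈ F_q`, the Kloosterman sum satisfies
`K(a) ≡ -Σ_{j=1}^{q-2} g(j)² ω^j(a) (mod 2^n)` in the ring of integers `𝕎(F_q)`
of `ℚ₂(ξ)`, where `g(j) = τ(ω^{-j})` and `ω` is the Teichmüller character. -/
theorem kloosterman_gauss_sum_congruence (n : ℕ) (hn : 1 ≤ n)
    (F : Type*) [Field F] [Fintype F] [DecidableEq F] [CharP F 2] [Algebra (ZMod 2) F]
    (hcard : Fintype.card F = 2 ^ n) (a : F)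
    (g : ℕ → WittVector 2 F)
    (hg : ∀ j, g j = - ∑ x : Fˣ, (WittVector.teichmuller 2 ((x⁻¹ : Fˣ) : F)) ^ j
          * (-1) ^ (Algebra.trace (ZMod 2) F x).val) :
    ((2 : WittVector 2 F) ^ n) ∣
      ((∑ x : F, (-1 : ℤ) ^ (Algebra.trace (ZMod 2) F (x ^ (2 ^ n - 2) + a * x)).val :
          ℤ) : WittVector 2 F)
        - (- ∑ j ∈ Finset.Icc 1 (2 ^ n - 2),
              (g j) ^ 2 * WittVector.teichmuller 2 (a ^ j)) := by
  have h2W : (2 : WittVector 2 F) ^ n = ((Fintype.card F : ℕ) : WittVector 2 F) := by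
    rw [hcard]; push_cast; ring
  rcases eq_or_lt_of_le hn with h1 | h2
  · -- n = 1
    subst h1
    have hIcc : Finset.Icc 1 (2 ^ 1 - 2) = ∅ := by decide
    rw [hIcc]
    simp only [Finset.sum_empty, neg_zero, sub_zero]
    set S : ℤ := ∑ x : F, (-1 : ℤ) ^
      (Algebra.trace (ZMod 2) F (x ^ (2 ^ 1 - 2) + a * x)).val with hS
    have hmod : ((S : ℤ) : ZMod 2) = 0 := by
      rw [hS]
      push_cast
      simp only [show (-1 : ZMod 2) = 1 from by decide, one_pow]
      simp [Finset.card_univ, hcard]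
      decide
    obtain ⟨k, hk⟩ := (ZMod.intCast_zmod_eq_zero_iff_dvd S 2).mp hmod
    rw [hk]
    refine ⟨((k : ℤ) : WittVector 2 F), ?_⟩
    push_cast
    ring
  · -- 2 ≤ n
    have h4 : 4 ≤ Fintype.card F := by
      rw [hcard]
      calc (4 : ℕ) = 2 ^ 2 := by norm_num
      _ ≤ 2 ^ n := Nat.pow_le_pow_right (by norm_num) h2
    have := KGS.main h4 a g hg
    rw [hcard] at this
    rw [h2W, hcard]
    exact this
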